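/- Suppose ā > b̄, and let ρ ∈ (0,1) satisfy Σᵢ pᵢ · aᵢ/(b̄ + aᵢ ρ) = 1 (i.e., ρ is the large-population fixation probability of the mutant type). Then ρ ≤ 1 − b̄/ā, and equality holds if and only if aᵢ = ā for every i ∈ {1,…,m}. In other words, any heterogeneity in mutant fitness strictly decreases a beneficial mutant's fixation probability below its value 1 − b̄/ā in a homogeneous environment. -/

import Mathlib

/-- Mutant heterogeneity suppresses selection: if `abar > bbar` and `ρ ∈ (0,1)`
satisfies `∑ i, p i * a i / (bbar + a i * ρ) = 1`, then `ρ ≤ 1 - bbar/abar`,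
with equality iff `a i = abar` for every `i`. -/
theorem stmt_5 (m : ℕ) (hm : 1 ≤ m) (p a : Fin m → ℝ)
    (hp : ∀ i, 0 < p i ∧ p i < 1) (hpsum : ∑ i, p i = 1)
    (ha : ∀ i, 0 < a i) (bbar : ℝ) (hbbar : 0 < bbar)
    (abar : ℝ) (habar : abar = ∑ i, p i * a i)
    (hab : bbar < abar)
    (ρ : ℝ) (hρ0 : 0 < ρ) (hρ1 : ρ < 1)
    (hfix : ∑ i, p i * (a i / (bbar + a i * ρ)) = 1) :
    ρ ≤ 1 - bbar / abar ∧ (ρ = 1 - bbar / abar ↔ ∀ i, a i = abar) := by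
  have habar0 : 0 < abar := hbbar.trans hab
  have hE : (0:ℝ) < bbar + abar * ρ := by positivity
  have hEi : ∀ i : Fin m, (0:ℝ) < bbar + a i * ρ := fun i => by
    have := ha i; positivity
  set D : ℝ := ∑ i, p i * ((abar - a i) ^ 2 / (bbar + a i * ρ)) with hD
  have htermnn : ∀ i : Fin m, 0 ≤ p i * ((abar - a i) ^ 2 / (bbar + a i * ρ)) := by
    intro i
    have h1 := (hp i).1
    have h2 := hEi i
    positivity
  have hDnn : 0 ≤ D := Finset.sum_nonneg fun i _ => htermnn i
  have key : ∀ i : Fin m, p i * (a i / (bbar + a i * ρ)) =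
      p i * (abar / (bbar + abar * ρ))
      + (bbar / (bbar + abar * ρ) ^ 2) * (p i * (a i - abar))
      - (bbar * ρ / (bbar + abar * ρ) ^ 2) *
          (p i * ((abar - a i) ^ 2 / (bbar + a i * ρ))) := by
    intro i
    have h1 : (bbar + a i * ρ) ≠ 0 := (hEi i).ne'
    have h2 : (bbar + abar * ρ) ≠ 0 := hE.ne'
    field_simp
    ring
  have h0 : ∑ i, p i * (a i - abar) = 0 := by
    simp only [mul_sub]
    rw [Finset.sum_sub_distrib, ← Finset.sum_mul, hpsum, ← habar]
    ring
  have hsum : (1:ℝ) = abar / (bbar + abar * ρ)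
      - (bbar * ρ / (bbar + abar * ρ) ^ 2) * D := by
    calc (1:ℝ) = ∑ i, p i * (a i / (bbar + a i * ρ)) := hfix.symm
    _ = ∑ i, (p i * (abar / (bbar + abar * ρ))
          + (bbar / (bbar + abar * ρ) ^ 2) * (p i * (a i - abar))
          - (bbar * ρ / (bbar + abar * ρ) ^ 2) *
              (p i * ((abar - a i) ^ 2 / (bbar + a i * ρ)))) :=
        Finset.sum_congr rfl fun i _ => key i
    _ = (∑ i, p i) * (abar / (bbar + abar * ρ))
          + (bbar / (bbar + abar * ρ) ^ 2) * (∑ i, p i * (a i - abar))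
          - (bbar * ρ / (bbar + abar * ρ) ^ 2) * D := by
        rw [Finset.sum_sub_distrib, Finset.sum_add_distrib, ← Finset.sum_mul,
          ← Finset.mul_sum, ← Finset.mul_sum, hD]
    _ = abar / (bbar + abar * ρ)
          - (bbar * ρ / (bbar + abar * ρ) ^ 2) * D := by
        rw [hpsum, h0]; ring
  have h1 : abar / (bbar + abar * ρ) - 1
      = (bbar * ρ / (bbar + abar * ρ) ^ 2) * D := by linarith
  have h2 : abar - (bbar + abar * ρ)
      = (abar / (bbar + abar * ρ) - 1) * (bbar + abar * ρ) := by
    field_simp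
  have hge : 0 ≤ abar - (bbar + abar * ρ) := by
    rw [h2, h1]; positivity
  have hD0 : D = 0 ↔ ∀ i, a i = abar := by
    constructor
    · intro h i
      have hterm := (Finset.sum_eq_zero_iff_of_nonneg
        (fun j _ => htermnn j)).mp h i (Finset.mem_univ i)
      have hpne : p i ≠ 0 := (hp i).1.ne'
      have hEne : (bbar + a i * ρ) ≠ 0 := (hEi i).ne'
      have hsq : (abar - a i) ^ 2 = 0 := by
        rcases mul_eq_zero.mp hterm with h' | h'
        · exact absurd h' hpne
        · rcases div_eq_zero_iff.mp h' with h'' | h''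
          · exact h''
          · exact absurd h'' hEne
      have := pow_eq_zero_iff (n := 2) (by norm_num) |>.mp hsq
      linarith [sub_eq_zero.mp this]
    · intro h
      apply Finset.sum_eq_zero
      intro i _
      rw [h i]
      simp
  have hEeq : abar - (bbar + abar * ρ) = 0 ↔ D = 0 := by
    rw [h2, h1]
    constructor
    · intro h
      have hc : 0 < bbar * ρ / (bbar + abar * ρ) ^ 2 := by positivity
      rcases mul_eq_zero.mp h with h' | h'
      · rcases mul_eq_zero.mp h' with h'' | h''
        · exact absurd h'' hc.ne'
        · exact h''
      · exact absurd h' hE.ne'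
    · intro h; rw [h]; ring
  have hiff : ρ = 1 - bbar / abar ↔ abar - (bbar + abar * ρ) = 0 := by
    constructor
    · intro h
      rw [h]
      field_simp
      ring
    · intro h
      have : bbar / abar = 1 - ρ := by
        rw [div_eq_iff habar0.ne']
        linarith
      linarith [this]
  constructor
  · have hba : bbar / abar ≤ 1 - ρ := by
      rw [div_le_iff₀ habar0]
      nlinarith
    linarith
  · rw [hiff, hEeq, hD0]
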